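/- Lemma 3.4 (similarity transformation, pointwise form). Assume ρ ≠ 0 and write ρ = |ρ| e^{iφ} with φ ∈ [0,2π); set η := (1/(2π)) ( ∫₀^{2π} V(t) dt − i (ln|ρ| + iφ) ), W(x) := exp(−i ∫₀ˣ V(t) dt + iηx) for x ∈ [0,2π], and K(x) := W(x) k(x) / W(2π). Then W(2π) = ρ, and for every f : [0,2π] → ℂ that is absolutely continuous with derivative f′ and satisfies f(0) = ρ f(2π), the function h := W·f is absolutely continuous with some derivative h′, satisfies h(0) = h(2π), and for almost every x ∈ (0,2π): i h′(x) + h(2π) K(x) + η h(x) = W(x) · ( i f′(x) + V(x) f(x) + f(2π) k(x) ). -/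

import Mathlib

open MeasureTheory Real Complex

section Aux
open Set


lemma L_fubini (g h : ℝ → ℂ) {x : ℝ}
    (hg : IntegrableOn g (Set.Ioc 0 x)) (hh : IntegrableOn h (Set.Ioc 0 x)) :
    (∫ t in Set.Ioc (0:ℝ) x, (g t * ∫ s in Set.Ioc (0:ℝ) t, h s))
      = ∫ s in Set.Ioc (0:ℝ) x, (h s * ∫ t in Set.Ioc s x, g t) := by
  set μ := volume.restrict (Set.Ioc (0:ℝ) x) with hμ
  set F : ℝ → ℝ → ℂ := fun t s =>
    Set.indicator {p : ℝ × ℝ | p.2 ≤ p.1} (fun p => g p.1 * h p.2) (t, s) with hF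
  have hFint : Integrable (Function.uncurry F) (μ.prod μ) := by
    have h1 : Integrable (fun p : ℝ × ℝ => g p.1 * h p.2) (μ.prod μ) := hg.mul_prod hh
    have h2 : MeasurableSet {p : ℝ × ℝ | p.2 ≤ p.1} :=
      measurableSet_le measurable_snd measurable_fst
    have := h1.indicator h2
    exact this.congr (by filter_upwards with p; rfl)
  have hFts : ∀ t s : ℝ, F t s = (Set.Iic t).indicator (fun s => g t * h s) s := by
    intro t s
    by_cases hst : s ≤ t
    · have h1 : (t,s) ∈ {p : ℝ × ℝ | p.2 ≤ p.1} := hst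
      rw [hF]; simp only [Set.indicator_of_mem h1, Set.indicator_of_mem (Set.mem_Iic.2 hst)]
    · have h1 : (t,s) ∉ {p : ℝ × ℝ | p.2 ≤ p.1} := hst
      rw [hF]; simp only [Set.indicator_of_notMem h1,
        Set.indicator_of_notMem (fun c => hst (Set.mem_Iic.1 c))]
  have hFst : ∀ t s : ℝ, F t s = (Set.Ici s).indicator (fun t => g t * h s) t := by
    intro t s
    by_cases hst : s ≤ t
    · have h1 : (t,s) ∈ {p : ℝ × ℝ | p.2 ≤ p.1} := hst
      rw [hF]; simp only [Set.indicator_of_mem h1, Set.indicator_of_mem (Set.mem_Ici.2 hst)]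
    · have h1 : (t,s) ∉ {p : ℝ × ℝ | p.2 ≤ p.1} := hst
      rw [hF]; simp only [Set.indicator_of_notMem h1,
        Set.indicator_of_notMem (fun c => hst (Set.mem_Ici.1 c))]
  calc (∫ t in Set.Ioc (0:ℝ) x, (g t * ∫ s in Set.Ioc (0:ℝ) t, h s))
      = ∫ t, (∫ s, F t s ∂μ) ∂μ := by
        refine setIntegral_congr_fun measurableSet_Ioc (fun t ht => ?_)
        have : (∫ s, F t s ∂μ) = ∫ s in Set.Ioc (0:ℝ) x, (Set.Iic t).indicator
            (fun s => g t * h s) s := by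
          refine integral_congr_ae (Filter.Eventually.of_forall fun s => hFts t s)
        rw [this, setIntegral_indicator measurableSet_Iic]
        have hset : Set.Ioc (0:ℝ) x ∩ Set.Iic t = Set.Ioc 0 t := by
          rw [Set.Ioc_inter_Iic, min_eq_right ht.2]
        rw [hset, integral_const_mul]
    _ = ∫ s, (∫ t, F t s ∂μ) ∂μ := integral_integral_swap hFint
    _ = ∫ s in Set.Ioc (0:ℝ) x, (h s * ∫ t in Set.Ioc s x, g t) := by
        refine setIntegral_congr_fun measurableSet_Ioc (fun s hs => ?_)
        have : (∫ t, F t s ∂μ) = ∫ t in Set.Ioc (0:ℝ) x, (Set.Ici s).indicator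
            (fun t => g t * h s) t := by
          refine integral_congr_ae (Filter.Eventually.of_forall fun t => hFst t s)
        rw [this, setIntegral_indicator measurableSet_Ici]
        have hset : Set.Ioc (0:ℝ) x ∩ Set.Ici s = Set.Icc s x := by
          ext t
          simp only [Set.mem_inter_iff, Set.mem_Ioc, Set.mem_Ici, Set.mem_Icc]
          constructor
          · rintro ⟨⟨_, h2⟩, h3⟩; exact ⟨h3, h2⟩
          · rintro ⟨h1, h2⟩; exact ⟨⟨lt_of_lt_of_le hs.1 h1, h2⟩, h1⟩
        rw [hset, integral_Icc_eq_integral_Ioc, integral_mul_const, mul_comm]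

section Primitive

variable {c : ℝ → ℂ} {b : ℝ}

/-- additivity of the Ioc primitive -/
lemma L_split {u : ℝ → ℂ} (hu : IntegrableOn u (Set.Ioc 0 b)) {s x : ℝ}
    (hs : 0 ≤ s) (hsx : s ≤ x) (hxb : x ≤ b) :
    (∫ t in Set.Ioc s x, u t)
      = (∫ t in Set.Ioc (0:ℝ) x, u t) - ∫ t in Set.Ioc (0:ℝ) s, u t := by
  have hunion : Set.Ioc (0:ℝ) s ∪ Set.Ioc s x = Set.Ioc 0 x :=
    Set.Ioc_union_Ioc_eq_Ioc hs hsx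
  have hdisj : Disjoint (Set.Ioc (0:ℝ) s) (Set.Ioc s x) := Set.Ioc_disjoint_Ioc_of_le le_rfl
  have h1 : IntegrableOn u (Set.Ioc (0:ℝ) s) :=
    hu.mono_set (Set.Ioc_subset_Ioc le_rfl (le_trans hsx hxb))
  have h2 : IntegrableOn u (Set.Ioc s x) :=
    hu.mono_set (Set.Ioc_subset_Ioc hs hxb)
  have := setIntegral_union hdisj measurableSet_Ioc h1 h2
  rw [hunion] at this
  rw [this]; ring

lemma L_contA (hc : IntegrableOn c (Set.Ioc 0 b)) :
    ContinuousOn (fun y => ∫ t in Set.Ioc (0:ℝ) y, c t) (Set.Icc 0 b) := by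
  refine intervalIntegral.continuousOn_primitive ?_
  have : volume.restrict (Set.Icc (0:ℝ) b) = volume.restrict (Set.Ioc (0:ℝ) b) :=
    Measure.restrict_congr_set (Ioc_ae_eq_Icc).symm
  unfold IntegrableOn
  rw [this]; exact hc


lemma L_mul_int {u ψ : ℝ → ℂ} {x : ℝ} (hx : x ∈ Set.Icc (0:ℝ) b)
    (hu : IntegrableOn u (Set.Ioc 0 x)) (hψ : ContinuousOn ψ (Set.Icc 0 b)) :
    IntegrableOn (fun t => ψ t * u t) (Set.Ioc 0 x) := by
  obtain ⟨C, hC⟩ := isCompact_Icc.exists_bound_of_continuousOn hψ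
  have hsub : Set.Ioc (0:ℝ) x ⊆ Set.Icc 0 b := fun t ht => ⟨le_of_lt ht.1, le_trans ht.2 hx.2⟩
  have hmeas : AEStronglyMeasurable ψ (volume.restrict (Set.Ioc 0 x)) :=
    (hψ.aestronglyMeasurable measurableSet_Icc).mono_measure (Measure.restrict_mono hsub le_rfl)
  have hbd : ∀ᵐ t ∂(volume.restrict (Set.Ioc 0 x)), ‖ψ t‖ ≤ C :=
    (ae_restrict_iff' measurableSet_Ioc).2 (Filter.Eventually.of_forall fun t ht => hC t (hsub ht))
  exact Integrable.bdd_mul hu hmeas hbd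

lemma L_intpow (hc : IntegrableOn c (Set.Ioc 0 b)) (m : ℕ) {x : ℝ} (hx : x ∈ Set.Icc (0:ℝ) b) :
    IntegrableOn (fun t => c t * (∫ s in Set.Ioc (0:ℝ) t, c s) ^ m) (Set.Ioc 0 x) := by
  have hcx : IntegrableOn c (Set.Ioc 0 x) := hc.mono_set (Set.Ioc_subset_Ioc le_rfl hx.2)
  have := L_mul_int hx hcx ((L_contA hc).pow m)
  exact this.congr (Filter.Eventually.of_forall fun t => by simp only [Pi.pow_apply]; ring)

lemma L_pow (hb : 0 ≤ b) (hc : IntegrableOn c (Set.Ioc 0 b)) (n : ℕ) :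
    ∀ x ∈ Set.Icc (0:ℝ) b,
      (∫ t in Set.Ioc (0:ℝ) x, c t * (∫ s in Set.Ioc (0:ℝ) t, c s) ^ n)
        = (∫ t in Set.Ioc (0:ℝ) x, c t) ^ (n + 1) / ((n : ℂ) + 1) := by
  set A : ℝ → ℂ := fun y => ∫ t in Set.Ioc (0:ℝ) y, c t with hA
  have hcont : ContinuousOn A (Set.Icc 0 b) := L_contA hc
  have hint : ∀ (m : ℕ) (x : ℝ), x ∈ Set.Icc (0:ℝ) b →
      IntegrableOn (fun t => c t * A t ^ m) (Set.Ioc 0 x) := fun m x hx => L_intpow hc m hx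
  induction n with
  | zero =>
    intro x hx
    simp only [pow_zero, mul_one, Nat.cast_zero, zero_add, pow_one, div_one]
  | succ n ih =>
    intro x hx
    have hfold : ∀ y : ℝ, (∫ s in Set.Ioc (0:ℝ) y, c s) = A y := fun _ => rfl
    have hxx : (0:ℝ) ≤ x := hx.1
    have hcx : IntegrableOn c (Set.Ioc 0 x) := hc.mono_set (Set.Ioc_subset_Ioc le_rfl hx.2)
    have hgx : IntegrableOn (fun t => c t * A t ^ n) (Set.Ioc 0 x) := hint n x hx
    have key : (∫ t in Set.Ioc (0:ℝ) x, c t * A t ^ (n + 1))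
        = ∫ s in Set.Ioc (0:ℝ) x, c s * ∫ t in Set.Ioc s x, c t * A t ^ n := by
      have h1 : (∫ t in Set.Ioc (0:ℝ) x, c t * A t ^ (n + 1))
          = ∫ t in Set.Ioc (0:ℝ) x, ((fun t => c t * A t ^ n) t * ∫ s in Set.Ioc (0:ℝ) t, c s) := by
        refine setIntegral_congr_fun measurableSet_Ioc (fun t _ => ?_)
        simp only [hfold]
        ring
      rw [h1, L_fubini _ _ hgx hcx]
    have inner : ∀ s ∈ Set.Ioc (0:ℝ) x,
        (∫ t in Set.Ioc s x, c t * A t ^ n) = A x ^ (n+1) / ((n:ℂ)+1) - A s ^ (n+1) / ((n:ℂ)+1) := by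
      intro s hs
      rw [L_split hgx (le_of_lt hs.1) hs.2 le_rfl, ih x hx, ih s ⟨le_of_lt hs.1, le_trans hs.2 hx.2⟩]
    have key2 : (∫ t in Set.Ioc (0:ℝ) x, c t * A t ^ (n + 1))
        = ∫ s in Set.Ioc (0:ℝ) x,
            (c s * (A x ^ (n+1) / ((n:ℂ)+1)) - c s * A s ^ (n+1) / ((n:ℂ)+1)) := by
      rw [key]
      refine setIntegral_congr_fun measurableSet_Ioc (fun s hs => ?_)
      rw [inner s hs]; ring
    have hconstint : IntegrableOn (fun s => c s * (A x ^ (n+1) / ((n:ℂ)+1))) (Set.Ioc 0 x) :=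
      hcx.mul_const _
    have hsecint : IntegrableOn (fun s => c s * A s ^ (n+1) / ((n:ℂ)+1)) (Set.Ioc 0 x) := by
      exact (hint (n+1) x hx).div_const _
    rw [integral_sub hconstint hsecint] at key2
    have e1 : (∫ s in Set.Ioc (0:ℝ) x, c s * (A x ^ (n+1) / ((n:ℂ)+1)))
        = A x * (A x ^ (n+1) / ((n:ℂ)+1)) := by
      rw [integral_mul_const]
    have e2 : (∫ s in Set.Ioc (0:ℝ) x, c s * A s ^ (n+1) / ((n:ℂ)+1))
        = (∫ s in Set.Ioc (0:ℝ) x, c s * A s ^ (n+1)) / ((n:ℂ)+1) := integral_div _ _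
    rw [e1, e2] at key2
    have hne : ((n:ℂ)+1) ≠ 0 := by
      have : ((n+1:ℕ):ℂ) ≠ 0 := Nat.cast_ne_zero.2 (Nat.succ_ne_zero n)
      push_cast at this; exact this
    have hne2 : ((n:ℂ)+2) ≠ 0 := by
      have : ((n+2:ℕ):ℂ) ≠ 0 := Nat.cast_ne_zero.2 (by omega)
      push_cast at this; exact this
    have hgoalden : ((n+1:ℕ):ℂ) + 1 ≠ 0 := by push_cast; rw [show ((n:ℂ)+1+1) = (n:ℂ)+2 by ring]; exact hne2
    field_simp [hne] at key2
    simp only [hfold]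
    rw [eq_div_iff hgoalden]
    push_cast
    linear_combination key2

lemma L_exp (hb : 0 ≤ b) (hc : IntegrableOn c (Set.Ioc 0 b)) :
    ∀ x ∈ Set.Icc (0:ℝ) b,
      (∫ t in Set.Ioc (0:ℝ) x, c t * Complex.exp (∫ s in Set.Ioc (0:ℝ) t, c s))
        = Complex.exp (∫ t in Set.Ioc (0:ℝ) x, c t) - 1 := by
  set A : ℝ → ℂ := fun y => ∫ t in Set.Ioc (0:ℝ) y, c t with hA
  have hfold : ∀ y : ℝ, (∫ s in Set.Ioc (0:ℝ) y, c s) = A y := fun _ => rfl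
  have hexp : ∀ z : ℂ, Complex.exp z = ∑' n : ℕ, z ^ n / (Nat.factorial n : ℂ) := fun z => by
    rw [Complex.exp_eq_exp_ℂ, NormedSpace.exp_eq_tsum_div]
  intro x hx
  have hcont : ContinuousOn A (Set.Icc 0 b) := L_contA hc
  obtain ⟨C, hC⟩ := isCompact_Icc.exists_bound_of_continuousOn hcont
  have hC0 : 0 ≤ C := le_trans (norm_nonneg (A 0)) (hC 0 ⟨le_rfl, hb⟩)
  set F : ℕ → ℝ → ℂ := fun n t => c t * A t ^ n / (Nat.factorial n : ℂ) with hF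
  have hcx : IntegrableOn c (Set.Ioc 0 x) := hc.mono_set (Set.Ioc_subset_Ioc le_rfl hx.2)
  have hFint : ∀ n, Integrable (F n) (volume.restrict (Set.Ioc 0 x)) :=
    fun n => (L_intpow hc n hx).div_const _
  set M0 : ℝ := ∫ t in Set.Ioc (0:ℝ) x, ‖c t‖ with hM0
  have hbound : ∀ n : ℕ, (∫ t in Set.Ioc (0:ℝ) x, ‖F n t‖) ≤ M0 * (C ^ n / (Nat.factorial n : ℝ)) := by
    intro n
    have hmono : (∫ t in Set.Ioc (0:ℝ) x, ‖F n t‖)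
        ≤ ∫ t in Set.Ioc (0:ℝ) x, ‖c t‖ * (C ^ n / (Nat.factorial n : ℝ)) := by
      refine integral_mono_ae (hFint n).norm (hcx.norm.mul_const _) ?_
      refine (ae_restrict_iff' measurableSet_Ioc).2 (Filter.Eventually.of_forall fun t ht => ?_)
      have hAt : ‖A t‖ ≤ C := hC t ⟨le_of_lt ht.1, le_trans ht.2 hx.2⟩
      show ‖F n t‖ ≤ ‖c t‖ * (C ^ n / (Nat.factorial n : ℝ))
      have : ‖F n t‖ = ‖c t‖ * ‖A t‖ ^ n / (Nat.factorial n : ℝ) := by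
        rw [hF]; simp [norm_div, norm_mul, norm_pow, Complex.norm_natCast]
      have h1 : ‖A t‖ ^ n ≤ C ^ n := pow_le_pow_left₀ (norm_nonneg _) hAt n
      have h2 : (0:ℝ) < (Nat.factorial n : ℝ) := by exact_mod_cast Nat.factorial_pos n
      rw [this, div_le_iff₀ h2]
      have h3 : ‖c t‖ * (C ^ n / (Nat.factorial n : ℝ)) * (Nat.factorial n : ℝ)
          = ‖c t‖ * C ^ n := by field_simp
      rw [h3]
      exact mul_le_mul_of_nonneg_left h1 (norm_nonneg _)
    calc (∫ t in Set.Ioc (0:ℝ) x, ‖F n t‖)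
        ≤ ∫ t in Set.Ioc (0:ℝ) x, ‖c t‖ * (C ^ n / (Nat.factorial n : ℝ)) := hmono
      _ = M0 * (C ^ n / (Nat.factorial n : ℝ)) := by rw [integral_mul_const]
  have hsummable : Summable fun n => ∫ t in Set.Ioc (0:ℝ) x, ‖F n t‖ := by
    refine Summable.of_nonneg_of_le (fun n => integral_nonneg fun t => norm_nonneg _)
      hbound ?_
    exact (Real.summable_pow_div_factorial C).mul_left M0
  have hswap := integral_tsum_of_summable_integral_norm hFint hsummable
  have hpt : ∀ t : ℝ, (∑' n, F n t) = c t * Complex.exp (A t) := by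
    intro t
    rw [hexp (A t)]
    rw [hF]
    simp only [mul_div_assoc]
    exact tsum_mul_left
  have hterm : ∀ n : ℕ, (∫ t in Set.Ioc (0:ℝ) x, F n t)
      = A x ^ (n + 1) / (Nat.factorial (n+1) : ℂ) := by
    intro n
    have h1 : (∫ t in Set.Ioc (0:ℝ) x, F n t)
        = (∫ t in Set.Ioc (0:ℝ) x, c t * A t ^ n) / (Nat.factorial n : ℂ) := by
      rw [hF]; exact integral_div _ _
    rw [h1, L_pow hb hc n x hx]
    rw [Nat.factorial_succ]
    push_cast
    rw [div_div]
  have hsum2 : Summable (fun n : ℕ => A x ^ n / (Nat.factorial n : ℂ)) :=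
    NormedSpace.expSeries_div_summable (A x)
  have htail : (∑' n : ℕ, A x ^ (n + 1) / (Nat.factorial (n+1) : ℂ)) = Complex.exp (A x) - 1 := by
    have h0 := hsum2.tsum_eq_zero_add
    rw [← hexp (A x)] at h0
    have : A x ^ 0 / (Nat.factorial 0 : ℂ) = 1 := by norm_num
    rw [this] at h0
    linear_combination -h0
  calc (∫ t in Set.Ioc (0:ℝ) x, c t * Complex.exp (∫ s in Set.Ioc (0:ℝ) t, c s))
      = ∫ t in Set.Ioc (0:ℝ) x, (∑' n, F n t) := by
        refine setIntegral_congr_fun measurableSet_Ioc (fun t _ => ?_)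
        rw [hpt t, hfold]
    _ = ∑' n, ∫ t in Set.Ioc (0:ℝ) x, F n t := hswap.symm
    _ = ∑' n : ℕ, A x ^ (n + 1) / (Nat.factorial (n+1) : ℂ) := by
        exact tsum_congr hterm
    _ = Complex.exp (A x) - 1 := htail

lemma L_product (hb : 0 ≤ b) (hc : IntegrableOn c (Set.Ioc 0 b)) (f f' : ℝ → ℂ)
    (hf' : IntegrableOn f' (Set.Ioc 0 b))
    (hf : ∀ x ∈ Set.Icc (0:ℝ) b, f x = f 0 + ∫ t in Set.Ioc (0:ℝ) x, f' t) :
    ∀ x ∈ Set.Icc (0:ℝ) b,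
      (∫ t in Set.Ioc (0:ℝ) x, (c t * Complex.exp (∫ s in Set.Ioc (0:ℝ) t, c s) * f t
          + Complex.exp (∫ s in Set.Ioc (0:ℝ) t, c s) * f' t))
        = Complex.exp (∫ t in Set.Ioc (0:ℝ) x, c t) * f x - f 0 := by
  set A : ℝ → ℂ := fun y => ∫ t in Set.Ioc (0:ℝ) y, c t with hA
  set W : ℝ → ℂ := fun t => Complex.exp (A t) with hWdef
  have hfold : ∀ y : ℝ, (∫ s in Set.Ioc (0:ℝ) y, c s) = A y := fun _ => rfl
  set P : ℝ → ℂ := fun y => ∫ t in Set.Ioc (0:ℝ) y, f' t with hP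
  have hPfold : ∀ y : ℝ, (∫ s in Set.Ioc (0:ℝ) y, f' s) = P y := fun _ => rfl
  have hWc : ContinuousOn W (Set.Icc 0 b) :=
    Complex.continuous_exp.comp_continuousOn (L_contA hc)
  have hPc : ContinuousOn P (Set.Icc 0 b) := L_contA hf'
  have hfc : ContinuousOn f (Set.Icc 0 b) := by
    have h1 : ContinuousOn (fun y => f 0 + P y) (Set.Icc 0 b) := continuousOn_const.add hPc
    exact h1.congr (fun y hy => hf y hy)
  intro x hx
  have hcx : IntegrableOn c (Set.Ioc 0 x) := hc.mono_set (Set.Ioc_subset_Ioc le_rfl hx.2)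
  have hf'x : IntegrableOn f' (Set.Ioc 0 x) := hf'.mono_set (Set.Ioc_subset_Ioc le_rfl hx.2)
  have hWf' : IntegrableOn (fun t => W t * f' t) (Set.Ioc 0 x) := L_mul_int hx hf'x hWc
  have hcWf : IntegrableOn (fun t => c t * W t * f t) (Set.Ioc 0 x) :=
    (L_mul_int hx hcx (hWc.mul hfc)).congr (Filter.Eventually.of_forall fun t => by simp only [Pi.mul_apply]; ring)
  have hcW : IntegrableOn (fun t => c t * W t) (Set.Ioc 0 x) :=
    (L_mul_int hx hcx hWc).congr (Filter.Eventually.of_forall fun t => by ring)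
  have hcWP : IntegrableOn (fun t => c t * W t * P t) (Set.Ioc 0 x) :=
    (L_mul_int hx hcx (hWc.mul hPc)).congr (Filter.Eventually.of_forall fun t => by simp only [Pi.mul_apply]; ring)
  have hcWf0 : IntegrableOn (fun t => c t * W t * f 0) (Set.Ioc 0 x) := hcW.mul_const _
  -- exp formula on subintervals
  have hexpf : ∀ y ∈ Set.Icc (0:ℝ) b, (∫ t in Set.Ioc (0:ℝ) y, c t * W t) = W y - 1 :=
    fun y hy => L_exp hb hc y hy
  -- step 1 : split the sum
  have step1 : (∫ t in Set.Ioc (0:ℝ) x, (c t * W t * f t + W t * f' t))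
      = (∫ t in Set.Ioc (0:ℝ) x, c t * W t * f t) + ∫ t in Set.Ioc (0:ℝ) x, W t * f' t :=
    integral_add hcWf hWf'
  -- step 2 : expand f inside the first integral
  have step2 : (∫ t in Set.Ioc (0:ℝ) x, c t * W t * f t)
      = (∫ t in Set.Ioc (0:ℝ) x, c t * W t * f 0)
        + ∫ t in Set.Ioc (0:ℝ) x, c t * W t * P t := by
    rw [← integral_add hcWf0 hcWP]
    refine setIntegral_congr_fun measurableSet_Ioc (fun t ht => ?_)
    have : f t = f 0 + P t := hf t ⟨le_of_lt ht.1, le_trans ht.2 hx.2⟩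
    rw [this]; ring
  have e1 : (∫ t in Set.Ioc (0:ℝ) x, c t * W t * f 0)
      = (W x - 1) * f 0 := by
    rw [integral_mul_const, hexpf x hx]
  -- Fubini on the second piece
  have e2 : (∫ t in Set.Ioc (0:ℝ) x, c t * W t * P t)
      = ∫ s in Set.Ioc (0:ℝ) x, f' s * ∫ t in Set.Ioc s x, c t * W t := by
    have := L_fubini (fun t => c t * W t) f' hcW hf'x
    rw [← this]
  have e3 : ∀ s ∈ Set.Ioc (0:ℝ) x, (∫ t in Set.Ioc s x, c t * W t) = W x - W s := by
    intro s hs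
    rw [L_split hcW (le_of_lt hs.1) hs.2 le_rfl,
      hexpf x hx, hexpf s ⟨le_of_lt hs.1, le_trans hs.2 hx.2⟩]
    ring
  have e4 : (∫ s in Set.Ioc (0:ℝ) x, f' s * ∫ t in Set.Ioc s x, c t * W t)
      = (∫ s in Set.Ioc (0:ℝ) x, f' s * W x) - ∫ s in Set.Ioc (0:ℝ) x, f' s * W s := by
    rw [← integral_sub (hf'x.mul_const _)
      (hWf'.congr (Filter.Eventually.of_forall fun t => by ring))]
    refine setIntegral_congr_fun measurableSet_Ioc (fun s hs => ?_)
    rw [e3 s hs]; ring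
  have e5 : (∫ s in Set.Ioc (0:ℝ) x, f' s * W x) = (f x - f 0) * W x := by
    rw [integral_mul_const]
    have := hf x hx
    rw [hPfold] at this
    rw [this]; ring
  have e6 : (∫ s in Set.Ioc (0:ℝ) x, f' s * W s) = ∫ s in Set.Ioc (0:ℝ) x, W s * f' s :=
    setIntegral_congr_fun measurableSet_Ioc (fun s _ => by ring)
  calc (∫ t in Set.Ioc (0:ℝ) x, (c t * Complex.exp (∫ s in Set.Ioc (0:ℝ) t, c s) * f t
          + Complex.exp (∫ s in Set.Ioc (0:ℝ) t, c s) * f' t))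
      = (∫ t in Set.Ioc (0:ℝ) x, (c t * W t * f t + W t * f' t)) := by
        exact setIntegral_congr_fun measurableSet_Ioc (fun t _ => by rw [hfold])
    _ = ((W x - 1) * f 0 + ((f x - f 0) * W x - ∫ s in Set.Ioc (0:ℝ) x, W s * f' s))
          + ∫ t in Set.Ioc (0:ℝ) x, W t * f' t := by
        rw [step1, step2, e1, e2, e4, e5, e6]
    _ = Complex.exp (∫ t in Set.Ioc (0:ℝ) x, c t) * f x - f 0 := by
        rw [hfold]
        ring

end Primitive

end Aux

/-- `f : [0,2π] → ℂ` is absolutely continuous with derivative `f'`: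
`f' ∈ L¹(0,2π)` and `f x = f 0 + ∫₀ˣ f'` for all `x ∈ [0,2π]`. -/
def IsACWithDeriv (f f' : ℝ → ℂ) : Prop :=
  MeasureTheory.IntegrableOn f' (Set.Ioc 0 (2 * Real.pi)) ∧
    ∀ x ∈ Set.Icc (0:ℝ) (2 * Real.pi), f x = f 0 + ∫ t in (0:ℝ)..x, f' t

/-- Lemma 3.4 (similarity transformation, pointwise form): with `ρ = |ρ|e^{iφ}`,
`η = (2π)^{−1}(∫₀^{2π}V − i(ln|ρ| + iφ))`, `W(x) = exp(−i∫₀ˣV + iηx)` and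
`K = W·k/W(2π)`, one has `W(2π) = ρ`, and for every `f` absolutely continuous with
`f(0) = ρ f(2π)`, the function `h = W·f` is absolutely continuous, periodic,
and satisfies `i h' + h(2π)K + ηh = W·(i f' + V f + f(2π) k)` a.e. on `(0,2π)`. -/
theorem similarity_transformation
    (V k : ℝ → ℂ)
    (hV : MeasureTheory.MemLp V ⊤ (MeasureTheory.volume.restrict (Set.Ioo 0 (2 * Real.pi))))
    (hk : MeasureTheory.MemLp k 2 (MeasureTheory.volume.restrict (Set.Ioo 0 (2 * Real.pi))))
    (ρ : ℂ) (hρ : ρ ≠ 0) (φ : ℝ) (hφ0 : 0 ≤ φ) (hφ2 : φ < 2 * Real.pi)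
    (hρφ : ρ = ((‖ρ‖ : ℝ) : ℂ) * Complex.exp (Complex.I * φ))
    (η : ℂ)
    (hη : η = (1 / (2 * Real.pi : ℂ)) *
      ((∫ t in (0:ℝ)..(2 * Real.pi), V t)
        - Complex.I * ((Real.log ‖ρ‖ : ℂ) + Complex.I * φ)))
    (W : ℝ → ℂ)
    (hW : ∀ x : ℝ, W x =
      Complex.exp (-(Complex.I * ∫ t in (0:ℝ)..x, V t) + Complex.I * η * x))
    (Kf : ℝ → ℂ) (hKf : ∀ x : ℝ, Kf x = W x * k x / W (2 * Real.pi)) :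
    W (2 * Real.pi) = ρ ∧
    ∀ f f' : ℝ → ℂ, IsACWithDeriv f f' → f 0 = ρ * f (2 * Real.pi) →
      ∃ h' : ℝ → ℂ, IsACWithDeriv (fun x => W x * f x) h' ∧
        W 0 * f 0 = W (2 * Real.pi) * f (2 * Real.pi) ∧
        ∀ᵐ x ∂(MeasureTheory.volume.restrict (Set.Ioo 0 (2 * Real.pi))),
          Complex.I * h' x + W (2 * Real.pi) * f (2 * Real.pi) * Kf x
              + η * (W x * f x)
            = W x * (Complex.I * f' x + V x * f x + f (2 * Real.pi) * k x) := by
  have hπ : (0:ℝ) ≤ 2 * Real.pi := by positivity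
  have htop : (2 * Real.pi) ∈ Set.Icc (0:ℝ) (2 * Real.pi) := ⟨hπ, le_rfl⟩
  set c : ℝ → ℂ := fun t => -(Complex.I * V t) + Complex.I * η with hcdef
  have hVint : IntegrableOn V (Set.Ioc 0 (2 * Real.pi)) := by
    have h0 : Integrable V (volume.restrict (Set.Ioo 0 (2 * Real.pi))) := hV.integrable le_top
    have h1 : volume.restrict (Set.Ioo (0:ℝ) (2 * Real.pi))
        = volume.restrict (Set.Ioc (0:ℝ) (2 * Real.pi)) :=
      Measure.restrict_congr_set Ioo_ae_eq_Ioc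
    unfold IntegrableOn
    rw [← h1]; exact h0
  have hcint : IntegrableOn c (Set.Ioc 0 (2 * Real.pi)) := by
    refine ((hVint.const_mul Complex.I).neg.add ?_)
    exact integrableOn_const measure_Ioc_lt_top.ne
  set A : ℝ → ℂ := fun y => ∫ t in Set.Ioc (0:ℝ) y, c t with hAdef
  have hAeq : ∀ x ∈ Set.Icc (0:ℝ) (2 * Real.pi),
      A x = -(Complex.I * ∫ t in (0:ℝ)..x, V t) + Complex.I * η * x := by
    intro x hx
    have hVx : IntegrableOn V (Set.Ioc 0 x) := hVint.mono_set (Set.Ioc_subset_Ioc le_rfl hx.2)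
    have h1 : (∫ t in (0:ℝ)..x, V t) = ∫ t in Set.Ioc (0:ℝ) x, V t :=
      intervalIntegral.integral_of_le hx.1
    have h2 : A x = (∫ t in Set.Ioc (0:ℝ) x, -(Complex.I * V t))
        + ∫ t in Set.Ioc (0:ℝ) x, (Complex.I * η) := by
      rw [hAdef]
      exact integral_add ((hVx.const_mul Complex.I).neg)
        (integrableOn_const measure_Ioc_lt_top.ne)
    rw [h2, integral_neg, integral_const_mul, setIntegral_const, h1]
    rw [Real.volume_real_Ioc_of_le hx.1, sub_zero]
    rw [Complex.real_smul]
    ring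
  have hWA : ∀ x ∈ Set.Icc (0:ℝ) (2 * Real.pi), W x = Complex.exp (A x) := by
    intro x hx
    rw [hW x, hAeq x hx]
  have hπC : ((Real.pi : ℂ)) ≠ 0 := by exact_mod_cast Real.pi_ne_zero
  have habs : (0:ℝ) < ‖ρ‖ := norm_pos_iff.2 hρ
  have part1 : W (2 * Real.pi) = ρ := by
    have hexp2 : -(Complex.I * ∫ t in (0:ℝ)..(2 * Real.pi), V t)
        + Complex.I * η * ((2 * Real.pi : ℝ) : ℂ)
        = (Real.log ‖ρ‖ : ℂ) + Complex.I * φ := by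
      rw [hη]
      push_cast
      set S : ℂ := ∫ t in (0:ℝ)..(2 * Real.pi), V t with hS
      set L : ℂ := ((Real.log ‖ρ‖ : ℝ) : ℂ) with hL
      have key : Complex.I * (1 / (2 * (Real.pi:ℂ)) * (S - Complex.I * (L + Complex.I * (φ:ℂ))))
          * (2 * (Real.pi:ℂ)) = Complex.I * (S - Complex.I * (L + Complex.I * (φ:ℂ))) := by
        field_simp
      rw [key]
      linear_combination (-(L + Complex.I * (φ:ℂ))) * Complex.I_mul_I
    rw [hW, hexp2, Complex.exp_add, ← Complex.ofReal_exp, Real.exp_log habs]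
    exact hρφ.symm
  have hW0 : W 0 = 1 := by
    rw [hW 0]
    simp [intervalIntegral.integral_same]
  refine ⟨part1, ?_⟩
  intro f f' hAC hper
  have hfset : ∀ x ∈ Set.Icc (0:ℝ) (2 * Real.pi),
      f x = f 0 + ∫ t in Set.Ioc (0:ℝ) x, f' t := fun x hx => by
    rw [hAC.2 x hx, intervalIntegral.integral_of_le hx.1]
  have hprod := L_product hπ hcint f f' hAC.1 hfset
  set h' : ℝ → ℂ := fun t => c t * W t * f t + W t * f' t with hh'def
  have hWc : ContinuousOn (fun t => Complex.exp (A t)) (Set.Icc 0 (2 * Real.pi)) :=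
    Complex.continuous_exp.comp_continuousOn (L_contA hcint)
  have hPc : ContinuousOn (fun y => ∫ t in Set.Ioc (0:ℝ) y, f' t)
      (Set.Icc 0 (2 * Real.pi)) := L_contA hAC.1
  have hfc : ContinuousOn f (Set.Icc 0 (2 * Real.pi)) := by
    have h1 : ContinuousOn (fun y => f 0 + ∫ t in Set.Ioc (0:ℝ) y, f' t)
        (Set.Icc 0 (2 * Real.pi)) := continuousOn_const.add hPc
    exact h1.congr (fun y hy => hfset y hy)
  have hbase : IntegrableOn
      (fun t => c t * Complex.exp (A t) * f t + Complex.exp (A t) * f' t)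
      (Set.Ioc 0 (2 * Real.pi)) := by
    have hWf' : IntegrableOn (fun t => Complex.exp (A t) * f' t)
        (Set.Ioc 0 (2 * Real.pi)) := L_mul_int htop hAC.1 hWc
    have hcWf : IntegrableOn (fun t => c t * Complex.exp (A t) * f t)
        (Set.Ioc 0 (2 * Real.pi)) :=
      (L_mul_int htop hcint (hWc.mul hfc)).congr (Filter.Eventually.of_forall fun t => by simp only [Pi.mul_apply]; ring)
    exact hcWf.add hWf'
  have hh'int : IntegrableOn h' (Set.Ioc 0 (2 * Real.pi)) := by
    refine hbase.congr ?_
    refine (ae_restrict_iff' measurableSet_Ioc).2 (Filter.Eventually.of_forall fun t ht => ?_)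
    rw [hh'def]
    simp only []
    rw [hWA t ⟨le_of_lt ht.1, ht.2⟩]
  refine ⟨h', ⟨hh'int, ?_⟩, ?_, ?_⟩
  · intro x hx
    simp only []
    rw [intervalIntegral.integral_of_le hx.1]
    have hcong : (∫ t in Set.Ioc (0:ℝ) x, h' t)
        = ∫ t in Set.Ioc (0:ℝ) x, (c t * Complex.exp (A t) * f t
            + Complex.exp (A t) * f' t) := by
      refine setIntegral_congr_fun measurableSet_Ioc (fun t ht => ?_)
      rw [hh'def]
      simp only []
      rw [hWA t ⟨le_of_lt ht.1, le_trans ht.2 hx.2⟩]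
    rw [hcong, hprod x hx, hW0, hWA x hx]
    ring
  · rw [hW0, one_mul, hper, part1]
  · refine Filter.Eventually.of_forall fun x => ?_
    have hW2ne : W (2 * Real.pi) ≠ 0 := by rw [hW]; exact Complex.exp_ne_zero _
    rw [hKf x]
    have hdiv : W (2 * Real.pi) * f (2 * Real.pi) * (W x * k x / W (2 * Real.pi))
        = f (2 * Real.pi) * (W x * k x) := by
      field_simp
    rw [hh'def]
    simp only []
    rw [hdiv, hcdef]
    simp only []
    linear_combination (η * (W x * f x) - V x * (W x * f x)) * Complex.I_mul_I
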